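/- For any complementary choice function f on X, there exist a set Y, a map φ : Y → X, and a completely complementary choice function g on Y (the ideal choice function of a preorder on Y) such that f(A) = φ(g(φ⁻¹(A))) for all A ⊆ X. -/
import Mathlib


theorem stmt_12 {X : Type} (f : Set X → Set X)
    (hchoice : ∀ A : Set X, f A ⊆ A)
    (hmono : ∀ A B : Set X, A ⊆ B → f A ⊆ f B)
    (hcons : ∀ A B : Set X, f A ⊆ B → B ⊆ A → f B = f A) :
    ∃ (Y : Type) (φ : Y → X) (g : Set Y → Set Y) (r : Y → Y → Prop),
      Reflexive r ∧ Transitive r ∧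
      (∀ B : Set Y, g B = {b ∈ B | ∀ y : Y, r y b → y ∈ B}) ∧
      (∀ A : Set X, f A = φ '' g (φ ⁻¹' A)) := by
  refine ⟨{p : X × Set X // p.1 ∈ f p.2}, fun p => p.1.1,
    fun B => {b ∈ B | ∀ y, y.1.2 = b.1.2 → y ∈ B},
    fun y b => y.1.2 = b.1.2, fun _ => rfl, fun _ _ _ h1 h2 => h1.trans h2,
    fun B => rfl, ?_⟩
  intro A
  ext x
  constructor
  · intro hx
    exact ⟨⟨(x, A), hx⟩, ⟨hchoice A hx, fun y hy => by
      have h2 := y.2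
      rw [show (y.1).2 = A from hy] at h2
      exact hchoice A h2⟩, rfl⟩
  · rintro ⟨⟨⟨z, S⟩, hz⟩, ⟨hzA, hall⟩, rfl⟩
    -- hz : z ∈ f S, hzA : z ∈ A, hall says f S ⊆ A
    have hfSA : f S ⊆ A := fun y hy => hall ⟨(y, S), hy⟩ rfl
    have h1 : f (S ∩ A) = f S := hcons S (S ∩ A)
      (fun y hy => ⟨hchoice S hy, hfSA hy⟩) Set.inter_subset_left
    have : z ∈ f (S ∩ A) := h1 ▸ hz
    exact hmono (S ∩ A) A Set.inter_subset_right this
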